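/- Let $N = 2K-1$ be odd and $\lambda_1,\ldots,\lambda_N$ distinct reals. Let $\mathbf T'(\boldsymbol\lambda)$ be the $2K\times 2K$ antisymmetric matrix whose top-left $N\times N$ block is $[\mathrm{sgn}(\lambda_n - \lambda_m)]$, whose last column has entries $1$ above the diagonal (and last row entries $-1$), and whose $(2K,2K)$ entry is $0$. Then $\mathrm{Pf}\,\mathbf T'(\boldsymbol\lambda) = \prod_{1\le m<n\le N}\mathrm{sgn}(\lambda_n - \lambda_m)$. -/

import Mathlib

/-- The Pfaffian of a `2K × 2K` real matrix. -/
noncomputable def pf {K : ℕ} (A : Matrix (Fin (2*K)) (Fin (2*K)) ℝ) : ℝ :=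
  (1 / (2^K * (Nat.factorial K) : ℝ)) *
    ∑ σ : Equiv.Perm (Fin (2*K)), ((Equiv.Perm.sign σ : ℤ) : ℝ) *
      ∏ m : Fin K,
        A (σ ⟨2*(m:ℕ), by have := m.isLt; omega⟩) (σ ⟨2*(m:ℕ)+1, by have := m.isLt; omega⟩)

open Finset Equiv Equiv.Perm

namespace Stmt14Aux

/-! ### Basic infrastructure: positions in pairs -/

def ep (K : ℕ) : Fin K × Fin 2 ≃ Fin (2*K) := finProdFinEquiv.trans (finCongr (by ring))

def pos2 {K : ℕ} (m : Fin K) (c : Fin 2) : Fin (2*K) := ep K (m, c)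

lemma pos2_val {K : ℕ} (m : Fin K) (c : Fin 2) : (pos2 m c).val = 2 * m.val + c.val := by
  simp [pos2, ep, finProdFinEquiv]; omega

lemma pos2_inj {K : ℕ} {m m' : Fin K} {c c' : Fin 2} (h : pos2 m c = pos2 m' c') :
    m = m' ∧ c = c' := by
  have h1 := congrArg Fin.val h
  rw [pos2_val, pos2_val] at h1
  have hc := c.isLt; have hc' := c'.isLt
  constructor <;> (apply Fin.ext; omega)

lemma pos2_surj {K : ℕ} (i : Fin (2*K)) : ∃ m c, pos2 m c = i :=
  ⟨((ep K).symm i).1, ((ep K).symm i).2, by simp [pos2]⟩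

lemma pos2_ne {K : ℕ} (m : Fin K) : pos2 m 0 ≠ pos2 m 1 := by
  intro h; exact absurd (pos2_inj h).2 (by decide)

/-- The "flip partner" permutation: swaps `2m ↔ 2m+1`. -/
def flipPerm (K : ℕ) : Perm (Fin (2*K)) :=
  (ep K).permCongr (Equiv.prodCongrRight fun _ : Fin K => Equiv.swap 0 1)

lemma flipPerm_pos2 {K : ℕ} (m : Fin K) (c : Fin 2) :
    flipPerm K (pos2 m c) = pos2 m (Equiv.swap 0 1 c) := by
  simp [flipPerm, pos2, Equiv.permCongr_apply, Equiv.prodCongrRight_apply]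

lemma flipPerm_flipPerm {K : ℕ} (i : Fin (2*K)) : flipPerm K (flipPerm K i) = i := by
  obtain ⟨m, c, rfl⟩ := pos2_surj i
  rw [flipPerm_pos2, flipPerm_pos2, Equiv.swap_apply_self]

lemma flipPerm_ne {K : ℕ} (i : Fin (2*K)) : flipPerm K i ≠ i := by
  obtain ⟨m, c, rfl⟩ := pos2_surj i
  rw [flipPerm_pos2]
  intro h
  have h2 := (pos2_inj h).2
  have : Equiv.swap (0 : Fin 2) 1 c ≠ c := by fin_cases c <;> decide
  exact this h2

/-- The doubled permutation `Ψ π` acting on pairs. -/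
def psi {K : ℕ} (π : Perm (Fin K)) : Perm (Fin (2*K)) :=
  (ep K).permCongr (Equiv.prodCongrLeft fun _ : Fin 2 => π)

lemma psi_pos2 {K : ℕ} (π : Perm (Fin K)) (m : Fin K) (c : Fin 2) :
    psi π (pos2 m c) = pos2 (π m) c := by
  simp [psi, pos2, Equiv.permCongr_apply, Equiv.prodCongrLeft_apply]

lemma sign_psi {K : ℕ} (π : Perm (Fin K)) : sign (psi π) = 1 := by
  rw [psi, Equiv.Perm.sign_permCongr, Equiv.Perm.sign_prodCongrLeft, Finset.prod_const,
    Finset.card_univ, Fintype.card_fin]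
  rcases Int.units_eq_one_or (sign π) with h | h <;> rw [h] <;> decide

/-- The product of in-pair swaps over a set `s`. -/
def wsw {K : ℕ} (s : Finset (Fin K)) : Perm (Fin (2*K)) :=
  (ep K).permCongr (Equiv.prodCongrRight fun m : Fin K =>
    if m ∈ s then Equiv.swap 0 1 else 1)

lemma wsw_pos2 {K : ℕ} (s : Finset (Fin K)) (m : Fin K) (c : Fin 2) :
    wsw s (pos2 m c) = pos2 m (if m ∈ s then Equiv.swap 0 1 c else c) := by
  simp only [wsw, pos2, Equiv.permCongr_apply, Equiv.symm_apply_apply,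
    Equiv.prodCongrRight_apply]
  split_ifs <;> simp

lemma sign_wsw {K : ℕ} (s : Finset (Fin K)) : sign (wsw s) = (-1) ^ s.card := by
  rw [wsw, Equiv.Perm.sign_permCongr, Equiv.Perm.sign_prodCongrRight]
  have : ∀ m : Fin K, sign (if m ∈ s then Equiv.swap (0 : Fin 2) 1 else 1)
      = if m ∈ s then (-1 : ℤˣ) else 1 := by
    intro m; split_ifs
    · exact Equiv.Perm.sign_swap (by decide)
    · simp
  rw [Finset.prod_congr rfl fun m _ => this m, Finset.prod_ite_mem, Finset.univ_inter,
    Finset.prod_const]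

/-! ### The Pfaffian rewritten with `pos2` -/

lemma pf_eq {K : ℕ} (A : Matrix (Fin (2*K)) (Fin (2*K)) ℝ) :
    pf A = (1 / (2^K * (Nat.factorial K) : ℝ)) *
      ∑ σ : Equiv.Perm (Fin (2*K)), ((Equiv.Perm.sign σ : ℤ) : ℝ) *
        ∏ m : Fin K, A (σ (pos2 m 0)) (σ (pos2 m 1)) := by
  unfold pf
  congr 1
  apply Finset.sum_congr rfl
  intro σ _
  congr 1
  apply Finset.prod_congr rfl
  intro m _
  congr 2 <;> · apply Fin.ext; simp [pos2_val]

lemma pf_submatrix {K : ℕ} (A : Matrix (Fin (2*K)) (Fin (2*K)) ℝ)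
    (σ : Perm (Fin (2*K))) :
    pf (A.submatrix σ σ) = ((Equiv.Perm.sign σ : ℤ) : ℝ) * pf A := by
  have hs : ((Equiv.Perm.sign σ : ℤ) : ℝ) * ((Equiv.Perm.sign σ : ℤ) : ℝ) = 1 := by
    rcases Int.units_eq_one_or (sign σ) with h | h <;> rw [h] <;> norm_num
  rw [pf_eq, pf_eq]
  have key : ∑ τ : Perm (Fin (2*K)), ((sign τ : ℤ) : ℝ) *
        ∏ m : Fin K, (A.submatrix σ σ) (τ (pos2 m 0)) (τ (pos2 m 1))
      = ∑ τ : Perm (Fin (2*K)), ((Equiv.Perm.sign σ : ℤ) : ℝ) *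
        (((sign τ : ℤ) : ℝ) * ∏ m : Fin K, A (τ (pos2 m 0)) (τ (pos2 m 1))) := by
    apply Fintype.sum_equiv (Equiv.mulLeft σ)
    intro τ
    show ((sign τ : ℤ) : ℝ) * ∏ m : Fin K, (A.submatrix σ σ) (τ (pos2 m 0)) (τ (pos2 m 1))
        = ((sign σ : ℤ) : ℝ) * (((sign (σ * τ) : ℤ) : ℝ) *
            ∏ m : Fin K, A ((σ * τ) (pos2 m 0)) ((σ * τ) (pos2 m 1)))
    have h1 : ((sign (σ * τ) : ℤ) : ℝ) = ((sign σ : ℤ) : ℝ) * ((sign τ : ℤ) : ℝ) := by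
      rw [Equiv.Perm.sign_mul]; push_cast [Units.val_mul]; ring
    have h2 : ∀ m : Fin K, (A.submatrix σ σ) (τ (pos2 m 0)) (τ (pos2 m 1))
        = A ((σ * τ) (pos2 m 0)) ((σ * τ) (pos2 m 1)) := fun m => rfl
    rw [Finset.prod_congr rfl fun m _ => h2 m, h1]
    set P := ∏ m : Fin K, A ((σ * τ) (pos2 m 0)) ((σ * τ) (pos2 m 1)) with hP
    linear_combination (-(((sign τ : ℤ) : ℝ) * P)) * hs
  rw [key, ← Finset.mul_sum]
  ring

/-! ### Real.sign lemmas -/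

lemma real_sign_mul (x y : ℝ) : (x * y).sign = x.sign * y.sign := by
  rcases lt_trichotomy x 0 with hx | hx | hx <;> rcases lt_trichotomy y 0 with hy | hy | hy
  · rw [Real.sign_of_neg hx, Real.sign_of_neg hy, Real.sign_of_pos (mul_pos_of_neg_of_neg hx hy)]
    norm_num
  · subst hy; simp [Real.sign_zero]
  · rw [Real.sign_of_neg hx, Real.sign_of_pos hy, Real.sign_of_neg (mul_neg_of_neg_of_pos hx hy)]
    norm_num
  · subst hx; simp [Real.sign_zero]
  · subst hx; simp [Real.sign_zero]
  · subst hx; simp [Real.sign_zero]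
  · rw [Real.sign_of_pos hx, Real.sign_of_neg hy, Real.sign_of_neg (mul_neg_of_pos_of_neg hx hy)]
    norm_num
  · subst hy; simp [Real.sign_zero]
  · rw [Real.sign_of_pos hx, Real.sign_of_pos hy, Real.sign_of_pos (mul_pos hx hy)]
    norm_num

lemma real_sign_prod {ι : Type*} (s : Finset ι) (f : ι → ℝ) :
    (∏ i ∈ s, f i).sign = ∏ i ∈ s, (f i).sign := by
  induction s using Finset.cons_induction with
  | empty => simp [Real.sign_one]
  | cons a s ha ih => rw [Finset.prod_cons, Finset.prod_cons, real_sign_mul, ih]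

/-! ### Product over pairs reshaping -/

lemma prod_pairs {n : ℕ} (f : Fin n → Fin n → ℝ) :
    ∏ q ∈ Finset.univ.filter (fun q : Fin n × Fin n => q.1 < q.2), f q.1 q.2
      = ∏ i : Fin n, ∏ j ∈ Finset.Ioi i, f i j := by
  rw [Finset.prod_sigma']
  refine (Finset.prod_bij (fun (x : Σ _ : Fin n, Fin n)
      (_ : x ∈ (Finset.univ : Finset (Fin n)).sigma fun i => Finset.Ioi i) => (x.1, x.2))
      ?_ ?_ ?_ ?_).symm
  · rintro ⟨i, j⟩ hij
    simp only [Finset.mem_sigma, Finset.mem_Ioi] at hij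
    simp [hij.2]
  · rintro ⟨i, j⟩ h1 ⟨i', j'⟩ h2 h
    simp only [Prod.mk.injEq] at h
    obtain ⟨rfl, rfl⟩ := h
    rfl
  · rintro ⟨i, j⟩ hij
    simp only [Finset.mem_filter, Finset.mem_univ, true_and] at hij
    exact ⟨⟨i, j⟩, by simp [hij], rfl⟩
  · rintro ⟨i, j⟩ _; rfl

/-! ### The sorted case: setup for the involution -/

section Sorted

variable {K : ℕ}

/-- The partner map induced by `σ` on values. -/
def pm (σ : Perm (Fin (2*K))) (x : Fin (2*K)) : Fin (2*K) := σ (flipPerm K (σ⁻¹ x))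

lemma pm_pm (σ : Perm (Fin (2*K))) (x : Fin (2*K)) : pm σ (pm σ x) = x := by
  simp [pm, flipPerm_flipPerm]

lemma pm_ne (σ : Perm (Fin (2*K))) (x : Fin (2*K)) : pm σ x ≠ x := by
  intro h
  have h2 : flipPerm K (σ⁻¹ x) = σ⁻¹ x := σ.injective (by
    show σ _ = σ _
    rw [Equiv.Perm.coe_inv, Equiv.apply_symm_apply]
    exact h)
  exact flipPerm_ne _ h2

lemma pm_inj {σ : Perm (Fin (2*K))} {x y : Fin (2*K)} (h : pm σ x = pm σ y) : x = y := by
  have := congrArg (pm σ) h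
  rwa [pm_pm, pm_pm] at this

def isNat (σ : Perm (Fin (2*K))) : Prop := ∀ i, σ (flipPerm K i) = flipPerm K (σ i)

instance : DecidablePred (isNat (K := K)) := fun _ => Fintype.decidableForallFintype

def bad (σ : Perm (Fin (2*K))) : Finset (Fin (2*K)) :=
  Finset.univ.filter (fun x => pm σ x ≠ flipPerm K x)

lemma mem_bad {σ : Perm (Fin (2*K))} {x : Fin (2*K)} :
    x ∈ bad σ ↔ pm σ x ≠ flipPerm K x := by simp [bad]

lemma not_isNat_iff {σ : Perm (Fin (2*K))} : ¬ isNat σ ↔ (bad σ).Nonempty := by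
  constructor
  · intro h
    by_contra hne
    apply h
    intro i
    have hx : ∀ x, pm σ x = flipPerm K x := by
      intro x
      by_contra hc
      exact hne ⟨x, mem_bad.2 hc⟩
    have := hx (σ i)
    rwa [pm, Equiv.Perm.coe_inv, Equiv.symm_apply_apply] at this
  · rintro ⟨x, hx⟩ h
    rw [mem_bad] at hx
    apply hx
    rw [pm, h, Equiv.Perm.coe_inv, Equiv.apply_symm_apply]

lemma flip_spec (i : Fin (2*K)) :
    (i.val % 2 = 0 ∧ (flipPerm K i).val = i.val + 1) ∨
    (i.val % 2 = 1 ∧ (flipPerm K i).val + 1 = i.val) := by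
  obtain ⟨m, c, rfl⟩ := pos2_surj i
  fin_cases c <;> simp [flipPerm_pos2, pos2_val] <;> omega

lemma pm_swap_mul (σ : Perm (Fin (2*K))) (b c x : Fin (2*K)) :
    pm (Equiv.swap b c * σ) x = Equiv.swap b c (pm σ (Equiv.swap b c x)) := by
  simp [pm, mul_inv_rev, Equiv.swap_inv, Equiv.Perm.mul_apply]

/-- The sign-reversing involution. -/
noncomputable def iota (σ : Perm (Fin (2*K))) : Perm (Fin (2*K)) :=
  if h : (bad σ).Nonempty then
    Equiv.swap (pm σ ((bad σ).min' h)) (pm σ (flipPerm K ((bad σ).min' h))) * σ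
  else σ

lemma iota_spec (σ : Perm (Fin (2*K))) (hσ : ¬ isNat σ) :
    ¬ isNat (iota σ) ∧ iota (iota σ) = σ ∧ iota σ ≠ σ ∧
    sign (iota σ) = - sign σ ∧
    ∀ (μ : Fin (2*K) → ℝ), StrictMono μ → ∀ m : Fin K,
      Real.sign (μ (iota σ (pos2 m 1)) - μ (iota σ (pos2 m 0)))
        = Real.sign (μ (σ (pos2 m 1)) - μ (σ (pos2 m 0))) := by
  have h : (bad σ).Nonempty := not_isNat_iff.1 hσ
  obtain ⟨a, ha_def⟩ : ∃ a, a = (bad σ).min' h := ⟨_, rfl⟩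
  obtain ⟨b, hb_def⟩ : ∃ b, b = pm σ a := ⟨_, rfl⟩
  obtain ⟨c, hc_def⟩ : ∃ c, c = pm σ (flipPerm K a) := ⟨_, rfl⟩
  have amem : a ∈ bad σ := by rw [ha_def]; exact Finset.min'_mem _ _
  have amin : ∀ x ∈ bad σ, a ≤ x := by
    intro x hx; rw [ha_def]; exact Finset.min'_le _ _ hx
  have hba : b ≠ flipPerm K a := by rw [hb_def]; exact mem_bad.1 amem
  have hfa_mem : flipPerm K a ∈ bad σ := by
    rw [mem_bad, flipPerm_flipPerm]
    intro hc2
    apply hba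
    rw [hb_def]
    conv_lhs => rw [← hc2]
    rw [pm_pm]
  have hafa : a < flipPerm K a := by
    rcases lt_or_eq_of_le (amin _ hfa_mem) with h1 | h1
    · exact h1
    · exact absurd h1.symm (flipPerm_ne a)
  have haval : a.val % 2 = 0 ∧ (flipPerm K a).val = a.val + 1 := by
    rcases flip_spec a with h1 | h1
    · exact h1
    · exfalso; rw [Fin.lt_def] at hafa; omega
  have hbne : b ≠ a := by rw [hb_def]; exact pm_ne σ a
  have hb_mem : b ∈ bad σ := by
    rw [mem_bad]
    intro h2
    have h3 : pm σ b = a := by rw [hb_def, pm_pm]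
    rw [h3] at h2
    apply hba
    rw [h2, flipPerm_flipPerm]
  have hbval : (flipPerm K a).val < b.val := by
    have h1 := amin b hb_mem
    rw [Fin.le_def] at h1
    have h2 : b.val ≠ a.val := fun hh => hbne (Fin.ext hh)
    have h3 : b.val ≠ (flipPerm K a).val := fun hh => hba (Fin.ext hh)
    omega
  have hcne : c ≠ flipPerm K a := by rw [hc_def]; exact pm_ne σ _
  have hc3 : pm σ c = flipPerm K a := by rw [hc_def, pm_pm]
  have hca : c ≠ a := by
    intro h2
    apply hba
    rw [h2] at hc3
    rw [hb_def, hc3]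
  have hc_mem : c ∈ bad σ := by
    rw [mem_bad]
    intro h2
    rw [hc3] at h2
    apply hca
    have h4 := congrArg (flipPerm K) h2
    rw [flipPerm_flipPerm, flipPerm_flipPerm] at h4
    exact h4.symm
  have hcval : (flipPerm K a).val < c.val := by
    have h1 := amin c hc_mem
    rw [Fin.le_def] at h1
    have h2 : c.val ≠ a.val := fun hh => hca (Fin.ext hh)
    have h3 : c.val ≠ (flipPerm K a).val := fun hh => hcne (Fin.ext hh)
    omega
  have hbc : b ≠ c := by
    intro h2
    have h3 : pm σ a = pm σ (flipPerm K a) := by rw [← hb_def, ← hc_def, h2]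
    exact flipPerm_ne a (pm_inj h3).symm
  have hab : a < b := by rw [Fin.lt_def]; omega
  have hac : a < c := by rw [Fin.lt_def]; omega
  have hfab : flipPerm K a < b := by rw [Fin.lt_def]; omega
  have hfac : flipPerm K a < c := by rw [Fin.lt_def]; omega
  have small : ∀ x : Fin (2*K), x < a →
      pm σ x = flipPerm K x ∧ flipPerm K x < a := by
    intro x hx
    constructor
    · by_contra h2
      have := amin x (mem_bad.2 h2)
      exact absurd hx (not_lt.2 this)
    · rw [Fin.lt_def] at hx ⊢
      rcases flip_spec x with h1 | h1 <;> omega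
  have hiota : iota σ = Equiv.swap b c * σ := by
    rw [iota, dif_pos h, ← ha_def, ← hb_def, ← hc_def]
  have pm_iota : ∀ x, pm (iota σ) x = Equiv.swap b c (pm σ (Equiv.swap b c x)) := by
    intro x; rw [hiota, pm_swap_mul]
  have sbc_a : Equiv.swap b c a = a :=
    Equiv.swap_apply_of_ne_of_ne (Ne.symm hbne) (Ne.symm hca)
  have sbc_fa : Equiv.swap b c (flipPerm K a) = flipPerm K a :=
    Equiv.swap_apply_of_ne_of_ne (Ne.symm hba) (Ne.symm hcne)
  have pm_iota_a : pm (iota σ) a = c := by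
    rw [pm_iota, sbc_a, ← hb_def, Equiv.swap_apply_left]
  have pm_iota_fa : pm (iota σ) (flipPerm K a) = b := by
    rw [pm_iota, sbc_fa, ← hc_def, Equiv.swap_apply_right]
  have a_mem' : a ∈ bad (iota σ) := by
    rw [mem_bad, pm_iota_a]
    exact hcne
  have h' : (bad (iota σ)).Nonempty := ⟨a, a_mem'⟩
  have hnat' : ¬ isNat (iota σ) := not_isNat_iff.2 h'
  have min'_eq : (bad (iota σ)).min' h' = a := by
    apply le_antisymm (Finset.min'_le _ _ a_mem')
    apply Finset.le_min'
    intro x hx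
    by_contra h2
    push_neg at h2
    obtain ⟨hpmx, hfx⟩ := small x h2
    rw [mem_bad] at hx
    apply hx
    rw [pm_iota]
    have hxb : x ≠ b := by intro hh; rw [hh] at h2; exact absurd h2 (not_lt.2 hab.le)
    have hxc : x ≠ c := by intro hh; rw [hh] at h2; exact absurd h2 (not_lt.2 hac.le)
    have hfxb : flipPerm K x ≠ b := by
      intro hh; rw [hh] at hfx; exact absurd hfx (not_lt.2 hab.le)
    have hfxc : flipPerm K x ≠ c := by
      intro hh; rw [hh] at hfx; exact absurd hfx (not_lt.2 hac.le)
    rw [Equiv.swap_apply_of_ne_of_ne hxb hxc, hpmx,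
      Equiv.swap_apply_of_ne_of_ne hfxb hfxc]
  refine ⟨hnat', ?_, ?_, ?_, ?_⟩
  · rw [iota, dif_pos h', min'_eq, pm_iota_a, pm_iota_fa, hiota,
      Equiv.swap_comm c b, ← mul_assoc, Equiv.swap_mul_self, one_mul]
  · rw [hiota]
    intro h2
    have h3 : Equiv.swap b c = 1 := mul_right_cancel (h2.trans (one_mul σ).symm)
    have := congrArg (fun e : Perm (Fin (2*K)) => e b) h3
    simp only [Equiv.swap_apply_left, Equiv.Perm.coe_one, id] at this
    exact hbc this.symm
  · rw [hiota, Equiv.Perm.sign_mul, Equiv.Perm.sign_swap hbc]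
    exact neg_one_mul _
  · intro μ hμ m
    obtain ⟨x, hx_def⟩ : ∃ x, σ (pos2 m 0) = x := ⟨_, rfl⟩
    obtain ⟨y, hy_def⟩ : ∃ y, σ (pos2 m 1) = y := ⟨_, rfl⟩
    have hx1 : iota σ (pos2 m 0) = Equiv.swap b c x := by
      rw [hiota, Equiv.Perm.mul_apply, hx_def]
    have hy1 : iota σ (pos2 m 1) = Equiv.swap b c y := by
      rw [hiota, Equiv.Perm.mul_apply, hy_def]
    have hxy_pm : pm σ x = y := by
      rw [← hx_def, ← hy_def, pm, Equiv.Perm.coe_inv, Equiv.symm_apply_apply, flipPerm_pos2,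
        Equiv.swap_apply_left]
    have hxy : x ≠ y := by
      intro hh
      rw [← hx_def, ← hy_def] at hh
      exact pos2_ne m (σ.injective hh)
    have key : Equiv.swap b c x < Equiv.swap b c y ↔ x < y := by
      rcases eq_or_ne x b with hxb' | hxb
      · have hy : y = a := by rw [← hxy_pm, hxb', hb_def, pm_pm]
        rw [hxb', hy, Equiv.swap_apply_left, sbc_a]
        exact iff_of_false (not_lt.2 hac.le) (not_lt.2 hab.le)
      rcases eq_or_ne x c with hxc' | hxc
      · have hy : y = flipPerm K a := by rw [← hxy_pm, hxc', hc_def, pm_pm]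
        rw [hxc', hy, Equiv.swap_apply_right, sbc_fa]
        exact iff_of_false (not_lt.2 hfab.le) (not_lt.2 hfac.le)
      rcases eq_or_ne y b with hyb' | hyb
      · have hx : x = a := by
          have h4 := congrArg (pm σ) hxy_pm
          rw [pm_pm] at h4
          rw [h4, hyb', hb_def, pm_pm]
        rw [hx, hyb', Equiv.swap_apply_left, sbc_a]
        exact iff_of_true hac hab
      rcases eq_or_ne y c with hyc' | hyc
      · have hx : x = flipPerm K a := by
          have h4 := congrArg (pm σ) hxy_pm
          rw [pm_pm] at h4
          rw [h4, hyc', hc_def, pm_pm]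
        rw [hx, hyc', Equiv.swap_apply_right, sbc_fa]
        exact iff_of_true hfab hfac
      · rw [Equiv.swap_apply_of_ne_of_ne hxb hxc, Equiv.swap_apply_of_ne_of_ne hyb hyc]
    rw [hx1, hy1, hx_def, hy_def]
    rcases lt_or_gt_of_ne hxy with h1 | h1
    · rw [Real.sign_of_pos (sub_pos.2 (hμ (key.2 h1))), Real.sign_of_pos (sub_pos.2 (hμ h1))]
    · have h2 : Equiv.swap b c y < Equiv.swap b c x := by
        rcases lt_trichotomy (Equiv.swap b c x) (Equiv.swap b c y) with h3 | h3 | h3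
        · exact absurd (key.1 h3) (not_lt.2 h1.le)
        · exact absurd ((Equiv.swap b c).injective h3) hxy
        · exact h3
      rw [Real.sign_of_neg (sub_neg.2 (hμ h2)), Real.sign_of_neg (sub_neg.2 (hμ h1))]

lemma pos2_lt (r : Fin K) : pos2 r 0 < pos2 r 1 := by
  rw [Fin.lt_def, pos2_val, pos2_val]; simp

def FF (p : Perm (Fin K) × Finset (Fin K)) : Perm (Fin (2*K)) := psi p.1 * wsw p.2

lemma FF_pos2 (p : Perm (Fin K) × Finset (Fin K)) (m : Fin K) (c : Fin 2) :
    FF p (pos2 m c) = pos2 (p.1 m) (if m ∈ p.2 then Equiv.swap 0 1 c else c) := by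
  rw [FF, Equiv.Perm.mul_apply, wsw_pos2, psi_pos2]

lemma isNat_FF (p : Perm (Fin K) × Finset (Fin K)) : isNat (FF p) := by
  intro i
  obtain ⟨m, c, rfl⟩ := pos2_surj i
  rw [flipPerm_pos2, FF_pos2, FF_pos2, flipPerm_pos2]
  split_ifs <;> simp

lemma sign_FF (p : Perm (Fin K) × Finset (Fin K)) :
    sign (FF p) = (-1) ^ p.2.card := by
  rw [FF, Equiv.Perm.sign_mul, sign_psi, sign_wsw, one_mul]

lemma FF_inj : Function.Injective (FF (K := K)) := by
  intro p q hpq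
  have h1 : ∀ m : Fin K, p.1 m = q.1 m ∧ ((m ∈ p.2) ↔ (m ∈ q.2)) := by
    intro m
    have h2 : FF p (pos2 m 0) = FF q (pos2 m 0) := by rw [hpq]
    rw [FF_pos2, FF_pos2] at h2
    obtain ⟨h3, h4⟩ := pos2_inj h2
    refine ⟨h3, ?_, ?_⟩
    · intro hm
      by_contra hm'
      rw [if_pos hm, if_neg hm'] at h4
      exact absurd h4 (by decide)
    · intro hm'
      by_contra hm
      rw [if_neg hm, if_pos hm'] at h4
      exact absurd h4 (by decide)
  obtain ⟨p1, p2⟩ := p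
  obtain ⟨q1, q2⟩ := q
  have hp1 : p1 = q1 := Equiv.ext fun m => (h1 m).1
  have hp2 : p2 = q2 := Finset.ext fun m => (h1 m).2
  rw [hp1, hp2]

lemma FF_surj (σ : Perm (Fin (2*K))) (hσ : isNat σ) : ∃ p, FF p = σ := by
  have h0 : ∀ m : Fin K, σ (pos2 m 0)
      = pos2 (((ep K).symm (σ (pos2 m 0))).1) (((ep K).symm (σ (pos2 m 0))).2) := by
    intro m; exact (Equiv.apply_symm_apply (ep K) (σ (pos2 m 0))).symm
  obtain ⟨r, hr⟩ : ∃ r : Fin K → Fin K, r = fun m => ((ep K).symm (σ (pos2 m 0))).1 :=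
    ⟨_, rfl⟩
  obtain ⟨d, hd⟩ : ∃ d : Fin K → Fin 2, d = fun m => ((ep K).symm (σ (pos2 m 0))).2 :=
    ⟨_, rfl⟩
  have h0' : ∀ m, σ (pos2 m 0) = pos2 (r m) (d m) := by
    intro m; rw [hr, hd]; exact h0 m
  have h1' : ∀ m, σ (pos2 m 1) = pos2 (r m) (Equiv.swap 0 1 (d m)) := by
    intro m
    have he : pos2 m 1 = flipPerm K (pos2 m (0 : Fin 2)) := by
      rw [flipPerm_pos2, Equiv.swap_apply_left]
    rw [he, hσ (pos2 m 0), h0' m, flipPerm_pos2]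
  have hfin2 : ∀ u v : Fin 2, u ≠ v → v = Equiv.swap 0 1 u := by decide
  have hrinj : Function.Injective r := by
    intro m m' hmm
    by_cases hdd : d m = d m'
    · have h2 : σ (pos2 m 0) = σ (pos2 m' 0) := by rw [h0', h0', hmm, hdd]
      exact (pos2_inj (σ.injective h2)).1
    · have hdd2 : d m' = Equiv.swap 0 1 (d m) := hfin2 (d m) (d m') hdd
      have h2 : σ (pos2 m' 0) = σ (pos2 m 1) := by rw [h0', h1', hmm, hdd2]
      have h3 := pos2_inj (σ.injective h2)
      exact absurd h3.2 (by decide)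
  refine ⟨(Equiv.ofBijective r (Finite.injective_iff_bijective.1 hrinj),
    Finset.univ.filter (fun m => d m = 1)), ?_⟩
  apply Equiv.ext
  intro i
  obtain ⟨m, c, rfl⟩ := pos2_surj i
  rw [FF_pos2]
  have hπ : (Equiv.ofBijective r (Finite.injective_iff_bijective.1 hrinj)) m = r m := rfl
  have hfin0 : ∀ u : Fin 2, u ≠ 1 → u = 0 := by decide
  rcases (by decide : ∀ u : Fin 2, u = 0 ∨ u = 1) c with rfl | rfl
  · rw [h0' m, hπ]
    by_cases hm : d m = 1
    · simp [hm]
    · simp [hm, hfin0 _ hm]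
  · rw [h1' m, hπ]
    by_cases hm : d m = 1
    · simp [hm]
    · simp [hm, hfin0 _ hm]

lemma sum_nat (μ : Fin (2*K) → ℝ) (hμ : StrictMono μ) :
    ∑ σ ∈ Finset.univ.filter (fun σ : Perm (Fin (2*K)) => isNat σ),
      (((sign σ : ℤ) : ℝ) * ∏ m : Fin K,
        Real.sign (μ (σ (pos2 m 1)) - μ (σ (pos2 m 0))))
      = 2^K * (Nat.factorial K : ℝ) := by
  have key : ∑ p : Perm (Fin K) × Finset (Fin K), (1 : ℝ)
      = ∑ σ ∈ Finset.univ.filter (fun σ : Perm (Fin (2*K)) => isNat σ),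
        (((sign σ : ℤ) : ℝ) * ∏ m : Fin K,
          Real.sign (μ (σ (pos2 m 1)) - μ (σ (pos2 m 0)))) := by
    apply Finset.sum_bij (fun (p : Perm (Fin K) × Finset (Fin K)) _ => FF p)
    · intro p _
      rw [Finset.mem_filter]
      exact ⟨Finset.mem_univ _, isNat_FF p⟩
    · intro p _ q _ hpq
      exact FF_inj hpq
    · intro σ hσ
      rw [Finset.mem_filter] at hσ
      obtain ⟨p, hp⟩ := FF_surj σ hσ.2
      exact ⟨p, Finset.mem_univ p, hp⟩
    · intro p _
      have hsgn : ((sign (FF p) : ℤ) : ℝ) = (-1 : ℝ) ^ p.2.card := by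
        rw [sign_FF]
        push_cast
        rfl
      have hfac : ∀ m : Fin K,
          Real.sign (μ (FF p (pos2 m 1)) - μ (FF p (pos2 m 0)))
            = if m ∈ p.2 then (-1 : ℝ) else 1 := by
        intro m
        rw [FF_pos2, FF_pos2]
        by_cases hm : m ∈ p.2
        · rw [if_pos hm, if_pos hm, if_pos hm, Equiv.swap_apply_left, Equiv.swap_apply_right,
            Real.sign_of_neg (sub_neg.2 (hμ (pos2_lt (p.1 m))))]
        · rw [if_neg hm, if_neg hm, if_neg hm,
            Real.sign_of_pos (sub_pos.2 (hμ (pos2_lt (p.1 m))))]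
      rw [Finset.prod_congr rfl (fun m _ => hfac m), hsgn, Finset.prod_ite_mem,
        Finset.univ_inter, Finset.prod_const, ← mul_pow]
      norm_num
  rw [← key, Finset.sum_const, Finset.card_univ, Fintype.card_prod, Fintype.card_perm,
    Fintype.card_finset, Fintype.card_fin, nsmul_eq_mul, mul_one]
  push_cast
  ring

lemma pf_strictMono (μ : Fin (2*K) → ℝ) (hμ : StrictMono μ) :
    pf (Matrix.of fun i j : Fin (2*K) => Real.sign (μ j - μ i)) = 1 := by
  rw [pf_eq]
  have hzero : ∑ σ ∈ Finset.univ.filter (fun σ : Perm (Fin (2*K)) => ¬ isNat σ),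
      (((sign σ : ℤ) : ℝ) * ∏ m : Fin K,
        Real.sign (μ (σ (pos2 m 1)) - μ (σ (pos2 m 0)))) = 0 := by
    apply Finset.sum_involution (fun σ _ => iota σ)
    · intro σ hσ
      obtain ⟨_, _, _, h4, h5⟩ := iota_spec σ (Finset.mem_filter.1 hσ).2
      have hprod := Finset.prod_congr rfl (fun m (_ : m ∈ Finset.univ) => h5 μ hμ m)
      have hsgn : ((sign (iota σ) : ℤ) : ℝ) = -((sign σ : ℤ) : ℝ) := by
        rw [h4]; push_cast; ring
      rw [hprod, hsgn]
      ring
    · intro σ hσ _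
      exact (iota_spec σ (Finset.mem_filter.1 hσ).2).2.2.1
    · intro σ hσ
      rw [Finset.mem_filter]
      exact ⟨Finset.mem_univ _, (iota_spec σ (Finset.mem_filter.1 hσ).2).1⟩
    · intro σ hσ
      exact (iota_spec σ (Finset.mem_filter.1 hσ).2).2.1
  have hentry : ∀ (σ : Perm (Fin (2*K))),
      (((sign σ : ℤ) : ℝ) * ∏ m : Fin K,
        (Matrix.of fun i j : Fin (2*K) => Real.sign (μ j - μ i))
          (σ (pos2 m 0)) (σ (pos2 m 1)))
      = ((sign σ : ℤ) : ℝ) * ∏ m : Fin K,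
          Real.sign (μ (σ (pos2 m 1)) - μ (σ (pos2 m 0))) := fun σ => rfl
  rw [Finset.sum_congr rfl (fun σ _ => hentry σ),
    ← Finset.sum_filter_add_sum_filter_not Finset.univ
      (fun σ : Perm (Fin (2*K)) => isNat σ), sum_nat μ hμ, hzero, add_zero]
  have h2 : (2:ℝ)^K * (Nat.factorial K : ℝ) ≠ 0 := by positivity
  field_simp

end Sorted


lemma main {K : ℕ} (μ : Fin (2*K) → ℝ) (hμ : Function.Injective μ) :
    pf (Matrix.of fun i j : Fin (2*K) => Real.sign (μ j - μ i))
      = ∏ q ∈ Finset.univ.filter (fun q : Fin (2*K) × Fin (2*K) => q.1 < q.2),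
          Real.sign (μ q.2 - μ q.1) := by
  obtain ⟨σ, hσ⟩ : ∃ σ : Perm (Fin (2*K)), σ = Tuple.sort μ := ⟨_, rfl⟩
  have hmono : Monotone (μ ∘ σ) := by rw [hσ]; exact Tuple.monotone_sort μ
  have hsm : StrictMono (μ ∘ σ) := hmono.strictMono_of_injective (hμ.comp σ.injective)
  have h1 : (Matrix.of fun i j : Fin (2*K) => Real.sign ((μ ∘ σ) j - (μ ∘ σ) i))
      = (Matrix.of fun i j : Fin (2*K) => Real.sign (μ j - μ i)).submatrix σ σ := rfl
  have h2 := pf_strictMono (μ ∘ σ) hsm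
  rw [h1, pf_submatrix] at h2
  have hs2 : ((sign σ : ℤ) : ℝ) * ((sign σ : ℤ) : ℝ) = 1 := by
    rcases Int.units_eq_one_or (sign σ) with h | h <;> rw [h] <;> norm_num
  have hpf : pf (Matrix.of fun i j : Fin (2*K) => Real.sign (μ j - μ i))
      = ((sign σ : ℤ) : ℝ) := by
    have h3 := congrArg (fun t => ((sign σ : ℤ) : ℝ) * t) h2
    rw [← mul_assoc, hs2, one_mul, mul_one] at h3
    exact h3
  have hvpos : 0 < (Matrix.vandermonde (μ ∘ σ)).det := by
    rw [Matrix.det_vandermonde]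
    apply Finset.prod_pos
    intro i _
    apply Finset.prod_pos
    intro j hj
    exact sub_pos.2 (hsm (Finset.mem_Ioi.1 hj))
  have hperm : Matrix.vandermonde (μ ∘ σ) = (Matrix.vandermonde μ).submatrix σ id := by
    ext i j
    simp [Matrix.vandermonde_apply, Matrix.submatrix_apply]
  have hdet : (0:ℝ) < ((sign σ : ℤ) : ℝ) * (Matrix.vandermonde μ).det := by
    rw [← Matrix.det_permute σ (Matrix.vandermonde μ)]
    have : (Matrix.vandermonde μ).submatrix (⇑σ) id = Matrix.vandermonde (μ ∘ σ) := hperm.symm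
    rw [this]
    exact hvpos
  have hsgn : Real.sign ((Matrix.vandermonde μ).det) = ((sign σ : ℤ) : ℝ) := by
    rcases Int.units_eq_one_or (sign σ) with h | h <;> rw [h] at hdet ⊢ <;>
      push_cast at hdet ⊢
    · rw [one_mul] at hdet
      rw [Real.sign_of_pos hdet]
    · rw [neg_one_mul] at hdet
      have : (Matrix.vandermonde μ).det < 0 := by linarith
      rw [Real.sign_of_neg this]
  have hprod : ∏ q ∈ Finset.univ.filter (fun q : Fin (2*K) × Fin (2*K) => q.1 < q.2),
      Real.sign (μ q.2 - μ q.1) = Real.sign ((Matrix.vandermonde μ).det) := by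
    rw [Matrix.det_vandermonde, real_sign_prod,
      prod_pairs (fun i j => Real.sign (μ j - μ i))]
    exact Finset.prod_congr rfl fun i _ => (real_sign_prod _ _).symm
  rw [hpf, hprod, hsgn]

end Stmt14Aux

/-- for `N = 2K - 1` distinct reals, the bordered antisymmetric matrix
`T'(λ)` (top-left `N × N` block `[sgn(λ_n - λ_m)]`, last column `1`, last row `-1`,
corner `0`) satisfies `Pf T'(λ) = ∏_{m<n} sgn(λ_n - λ_m)`. -/
theorem stmt14 (K : ℕ) (hK : 1 ≤ K) (l : Fin (2*K-1) → ℝ)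
    (hl : Function.Injective l) :
    pf (Matrix.of fun m n : Fin (2*K) =>
      if hm : (m:ℕ) < 2*K-1 then
        (if hn : (n:ℕ) < 2*K-1 then Real.sign (l ⟨n, hn⟩ - l ⟨m, hm⟩) else 1)
      else
        (if (n:ℕ) < 2*K-1 then (-1 : ℝ) else 0)) =
    ∏ q ∈ Finset.univ.filter
        (fun q : Fin (2*K-1) × Fin (2*K-1) => q.1 < q.2),
      Real.sign (l q.2 - l q.1) := by
  classical
  have hne : (Finset.univ : Finset (Fin (2*K-1))).Nonempty :=
    ⟨⟨0, by omega⟩, Finset.mem_univ _⟩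
  obtain ⟨M, hMdef⟩ : ∃ M : ℝ, M = (Finset.univ.sup' hne l) + 1 := ⟨_, rfl⟩
  have hM : ∀ i, l i < M := fun i => by
    rw [hMdef]
    exact lt_of_le_of_lt (Finset.le_sup' l (Finset.mem_univ i)) (lt_add_one _)
  obtain ⟨μ, hμdef⟩ : ∃ μ' : Fin (2*K) → ℝ,
      μ' = fun i : Fin (2*K) => if h : (i:ℕ) < 2*K-1 then l ⟨i, h⟩ else M := ⟨_, rfl⟩
  have hμlt : ∀ (i : Fin (2*K)) (h : (i:ℕ) < 2*K-1), μ i = l ⟨i, h⟩ := by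
    intro i h; rw [hμdef]; exact dif_pos h
  have hμge : ∀ (i : Fin (2*K)), ¬((i:ℕ) < 2*K-1) → μ i = M := by
    intro i h; rw [hμdef]; exact dif_neg h
  have hμinj : Function.Injective μ := by
    intro i j hij
    by_cases hi : (i:ℕ) < 2*K-1 <;> by_cases hj : (j:ℕ) < 2*K-1
    · rw [hμlt i hi, hμlt j hj] at hij
      have := hl hij
      exact Fin.ext (congrArg Fin.val this : ((⟨i, hi⟩ : Fin (2*K-1)) : ℕ) = _)
    · rw [hμlt i hi, hμge j hj] at hij
      exact absurd hij (ne_of_lt (hM _))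
    · rw [hμge i hi, hμlt j hj] at hij
      exact absurd hij.symm (ne_of_lt (hM _))
    · have h1 := i.isLt; have h2 := j.isLt
      apply Fin.ext; omega
  have hmx : (Matrix.of fun m n : Fin (2*K) =>
      if hm : (m:ℕ) < 2*K-1 then
        (if hn : (n:ℕ) < 2*K-1 then Real.sign (l ⟨n, hn⟩ - l ⟨m, hm⟩) else 1)
      else
        (if (n:ℕ) < 2*K-1 then (-1 : ℝ) else 0))
      = Matrix.of fun i j : Fin (2*K) => Real.sign (μ j - μ i) := by
    ext m n
    simp only [Matrix.of_apply]
    split_ifs with hm hn hn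
    · rw [hμlt m hm, hμlt n hn]
    · rw [hμlt m hm, hμge n hn]
      exact (Real.sign_of_pos (sub_pos.2 (hM _))).symm
    · rw [hμge m hm, hμlt n hn]
      exact (Real.sign_of_neg (sub_neg.2 (hM _))).symm
    · rw [hμge m hm, hμge n hn, sub_self, Real.sign_zero]
  rw [hmx, Stmt14Aux.main μ hμinj]
  rw [← Finset.prod_filter_mul_prod_filter_not
    (Finset.univ.filter (fun q : Fin (2*K) × Fin (2*K) => q.1 < q.2))
    (fun q : Fin (2*K) × Fin (2*K) => (q.2 : ℕ) < 2*K-1)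
    (fun q => Real.sign (μ q.2 - μ q.1))]
  have hone : ∏ q ∈ (Finset.univ.filter
        (fun q : Fin (2*K) × Fin (2*K) => q.1 < q.2)).filter
        (fun q => ¬((q.2 : ℕ) < 2*K-1)),
      Real.sign (μ q.2 - μ q.1) = 1 := by
    apply Finset.prod_eq_one
    intro q hq
    rw [Finset.mem_filter, Finset.mem_filter] at hq
    obtain ⟨⟨_, hlt⟩, hq2⟩ := hq
    have hq1 : (q.1 : ℕ) < 2*K-1 := by
      have h1 := q.2.isLt
      have h2 : (q.1 : ℕ) < (q.2 : ℕ) := hlt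
      omega
    rw [hμlt q.1 hq1, hμge q.2 hq2]
    exact Real.sign_of_pos (sub_pos.2 (hM _))
  rw [hone, mul_one]
  refine (Finset.prod_bij (fun (q : Fin (2*K-1) × Fin (2*K-1))
      (_ : q ∈ Finset.univ.filter (fun q : Fin (2*K-1) × Fin (2*K-1) => q.1 < q.2)) =>
      ((⟨q.1, by omega⟩ : Fin (2*K)), (⟨q.2, by omega⟩ : Fin (2*K))))
      ?_ ?_ ?_ ?_).symm
  · intro q hq
    rw [Finset.mem_filter] at hq
    rw [Finset.mem_filter, Finset.mem_filter]
    refine ⟨⟨Finset.mem_univ _, ?_⟩, ?_⟩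
    · exact hq.2
    · exact q.2.isLt
  · intro q hq q' hq' h
    rw [Prod.mk.injEq] at h
    obtain ⟨h1, h2⟩ := h
    have h1' := congrArg Fin.val h1
    have h2' := congrArg Fin.val h2
    exact Prod.ext (Fin.ext h1') (Fin.ext h2')
  · intro p hp
    rw [Finset.mem_filter, Finset.mem_filter] at hp
    obtain ⟨⟨_, hlt⟩, hp2⟩ := hp
    have hp1 : (p.1 : ℕ) < 2*K-1 := by
      have : (p.1 : ℕ) < (p.2 : ℕ) := hlt
      omega
    refine ⟨(⟨p.1, hp1⟩, ⟨p.2, hp2⟩), ?_, ?_⟩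
    · rw [Finset.mem_filter]
      exact ⟨Finset.mem_univ _, hlt⟩
    · exact Prod.ext (Fin.ext rfl) (Fin.ext rfl)
  · intro q hq
    rw [Finset.mem_filter] at hq
    rw [hμlt _ (by exact q.2.isLt), hμlt _ (by exact q.1.isLt)]
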